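/- Fix α > 0, ρ₀ ∈ ℝ, and 0 < r₀ < α/√3, and let R(T,ρ) be the exterior solution R(T,ρ) = r₀(1 − r₀²/α²) + (1 − 3r₀²/α²)(ρ−ρ₀) − [ (T+ρ−ρ₀)³ − (T−ρ+ρ₀)³ ]/(6α²) − r₀[ (T−ρ+ρ₀)² + (T+ρ−ρ₀)² ]/(2α²). Then the set { T > 0 : (∂R/∂T + ∂R/∂ρ)(T,ρ₀) = 0 } consists of the single point T₀ = −r₀ + √(α² − 2r₀²), and this T₀ coincides with the unique positive zero of the interior outgoing null expansion θ⁺(·, r₀), i.e. the unique positive solution t of t² + 2t·r₀ + 3r₀² = α². Hence the exterior marginally outer trapped cylinders meet the interior marginally outer trapped cylinders at the matching boundary. -/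

import Mathlib

theorem trapped_cylinders_match_at_boundary
    (α r₀ ρ₀ : ℝ) (hα : 0 < α) (hr₀ : 0 < r₀) (hr₀' : r₀ < α / Real.sqrt 3)
    (R : ℝ → ℝ → ℝ)
    (hR : ∀ T ρ : ℝ, R T ρ = r₀ * (1 - r₀ ^ 2 / α ^ 2)
      + (1 - 3 * r₀ ^ 2 / α ^ 2) * (ρ - ρ₀)
      - ((T + ρ - ρ₀) ^ 3 - (T - ρ + ρ₀) ^ 3) / (6 * α ^ 2)
      - r₀ * ((T - ρ + ρ₀) ^ 2 + (T + ρ - ρ₀) ^ 2) / (2 * α ^ 2)) :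
    {T : ℝ | 0 < T ∧
        deriv (fun s => R s ρ₀) T + deriv (fun x => R T x) ρ₀ = 0}
      = {-r₀ + Real.sqrt (α ^ 2 - 2 * r₀ ^ 2)} ∧
    0 < -r₀ + Real.sqrt (α ^ 2 - 2 * r₀ ^ 2) ∧
    (-r₀ + Real.sqrt (α ^ 2 - 2 * r₀ ^ 2)) ^ 2
        + 2 * (-r₀ + Real.sqrt (α ^ 2 - 2 * r₀ ^ 2)) * r₀ + 3 * r₀ ^ 2 = α ^ 2 ∧
    (∀ t : ℝ, 0 < t → t ^ 2 + 2 * t * r₀ + 3 * r₀ ^ 2 = α ^ 2 →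
      t = -r₀ + Real.sqrt (α ^ 2 - 2 * r₀ ^ 2)) := by
  have hα2 : (α : ℝ) ^ 2 ≠ 0 := pow_ne_zero 2 (ne_of_gt hα)
  -- 3 r₀² < α²
  have h3 : 3 * r₀ ^ 2 < α ^ 2 := by
    have hs3 : (0:ℝ) < Real.sqrt 3 := Real.sqrt_pos.2 (by norm_num)
    have h1 : r₀ * Real.sqrt 3 < α := (lt_div_iff₀ hs3).1 hr₀'
    have h2 : (r₀ * Real.sqrt 3) ^ 2 < α ^ 2 :=
      pow_lt_pow_left₀ h1 (by positivity) (by norm_num)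
    rw [mul_pow, Real.sq_sqrt (by norm_num : (0:ℝ) ≤ 3)] at h2
    linarith
  have hnn : 0 ≤ α ^ 2 - 2 * r₀ ^ 2 := by nlinarith
  set s := Real.sqrt (α ^ 2 - 2 * r₀ ^ 2) with hs
  have hs2 : s ^ 2 = α ^ 2 - 2 * r₀ ^ 2 := Real.sq_sqrt hnn
  have hsnn : 0 ≤ s := Real.sqrt_nonneg _
  have hrs : r₀ < s := by
    nlinarith [hs2, hsnn]
  -- T-derivative
  have hdT : ∀ T : ℝ, deriv (fun u => R u ρ₀) T = -(2 * r₀ * T) / α ^ 2 := by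
    intro T
    have hfun : (fun u => R u ρ₀) = fun u : ℝ =>
        r₀ * (1 - r₀ ^ 2 / α ^ 2) + (1 - 3 * r₀ ^ 2 / α ^ 2) * (ρ₀ - ρ₀)
        - ((u + ρ₀ - ρ₀) ^ 3 - (u - ρ₀ + ρ₀) ^ 3) / (6 * α ^ 2)
        - r₀ * ((u - ρ₀ + ρ₀) ^ 2 + (u + ρ₀ - ρ₀) ^ 2) / (2 * α ^ 2) := by
      funext u; exact hR u ρ₀
    have g1 : HasDerivAt (fun u : ℝ => u + ρ₀ - ρ₀) 1 T := by
      simpa using ((hasDerivAt_id T).add_const ρ₀).sub_const ρ₀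
    have g2 : HasDerivAt (fun u : ℝ => u - ρ₀ + ρ₀) 1 T := by
      simpa using ((hasDerivAt_id T).sub_const ρ₀).add_const ρ₀
    have H := (((hasDerivAt_const T (r₀ * (1 - r₀ ^ 2 / α ^ 2))).add
        (hasDerivAt_const T ((1 - 3 * r₀ ^ 2 / α ^ 2) * (ρ₀ - ρ₀)))).sub
        (((g1.pow 3).sub (g2.pow 3)).div_const (6 * α ^ 2))).sub
        ((((g2.pow 2).add (g1.pow 2)).const_mul r₀).div_const (2 * α ^ 2))
    have H2 : HasDerivAt (fun u => R u ρ₀) (-(2 * r₀ * T) / α ^ 2) T := by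
      rw [hfun]
      convert H using 1
      · rfl
      · rfl
      · rfl
      push_cast
      field_simp
      ring
    exact H2.deriv
  -- ρ-derivative
  have hdρ : ∀ T : ℝ, deriv (fun x => R T x) ρ₀ = 1 - 3 * r₀ ^ 2 / α ^ 2 - T ^ 2 / α ^ 2 := by
    intro T
    have hfun : (fun x => R T x) = fun x : ℝ =>
        r₀ * (1 - r₀ ^ 2 / α ^ 2) + (1 - 3 * r₀ ^ 2 / α ^ 2) * (x - ρ₀)
        - ((T + x - ρ₀) ^ 3 - (T - x + ρ₀) ^ 3) / (6 * α ^ 2)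
        - r₀ * ((T - x + ρ₀) ^ 2 + (T + x - ρ₀) ^ 2) / (2 * α ^ 2) := by
      funext x; exact hR T x
    have g1 : HasDerivAt (fun x : ℝ => T + x - ρ₀) 1 ρ₀ := by
      simpa using ((hasDerivAt_id ρ₀).const_add T).sub_const ρ₀
    have g2 : HasDerivAt (fun x : ℝ => T - x + ρ₀) (-1) ρ₀ := by
      simpa using ((hasDerivAt_id ρ₀).const_sub T).add_const ρ₀
    have H := (((hasDerivAt_const ρ₀ (r₀ * (1 - r₀ ^ 2 / α ^ 2))).add
        (((hasDerivAt_id ρ₀).sub_const ρ₀).const_mul (1 - 3 * r₀ ^ 2 / α ^ 2))).sub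
        (((g1.pow 3).sub (g2.pow 3)).div_const (6 * α ^ 2))).sub
        ((((g2.pow 2).add (g1.pow 2)).const_mul r₀).div_const (2 * α ^ 2))
    have H2 : HasDerivAt (fun x => R T x) (1 - 3 * r₀ ^ 2 / α ^ 2 - T ^ 2 / α ^ 2) ρ₀ := by
      rw [hfun]
      convert H using 1
      · rfl
      · rfl
      · rfl
      push_cast
      field_simp
      ring
    exact H2.deriv
  have hT0pos : 0 < -r₀ + s := by linarith
  have heq : (-r₀ + s) ^ 2 + 2 * (-r₀ + s) * r₀ + 3 * r₀ ^ 2 = α ^ 2 := by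
    nlinarith [hs2]
  have huniq : ∀ t : ℝ, 0 < t → t ^ 2 + 2 * t * r₀ + 3 * r₀ ^ 2 = α ^ 2 →
      t = -r₀ + s := by
    intro t ht hteq
    have hfac : (t + r₀ - s) * (t + r₀ + s) = 0 := by nlinarith [hs2]
    rcases mul_eq_zero.1 hfac with h | h
    · linarith
    · linarith
  refine ⟨?_, hT0pos, heq, huniq⟩
  ext T
  simp only [Set.mem_setOf_eq, Set.mem_singleton_iff]
  constructor
  · rintro ⟨hTpos, hd⟩
    rw [hdT T, hdρ T] at hd
    apply huniq T hTpos
    field_simp at hd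
    nlinarith [hd]
  · rintro rfl
    refine ⟨hT0pos, ?_⟩
    rw [hdT, hdρ]
    field_simp
    nlinarith [heq]
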